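/- (Category of fractions with weakened axioms.) Let C be a category and W a class of morphisms satisfying: (1) W contains all identities; (2) for every composable pair v : B → C, w : C → D in W there exists u : A → B with w∘v∘u ∈ W; (3) for every w ∈ W and every f with the same codomain as w, there exist w′ ∈ W and f′ with w∘f′ = f∘w′; (4) for every w ∈ W and parallel f₁, f₂ with w∘f₁ = w∘f₂ there exists w′ ∈ W with f₁∘w′ = f₂∘w′. Then the localization C[W⁻¹] admits a calculus of right fractions: every morphism A → B of C[W⁻¹] can be written as f ∘ (w)⁻¹ for a span A ←w− X −f→ B with w ∈ W, and two spans (w₁, f₁), (w₂, f₂) represent the same morphism iff there exist u₁, u₂ with w₁∘u₁ = w₂∘u₂ ∈ W and f₁∘u₁ = f₂∘u₂. -/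

import Mathlib

open CategoryTheory

universe v u

namespace Statement8Aux

variable {C : Type u} [Category.{v} C]

/-- The multiplicative closure of `W`. -/
inductive mclos (W : MorphismProperty C) : {X Y : C} → (X ⟶ Y) → Prop
  | of {X Y : C} (f : X ⟶ Y) (hf : W f) : mclos W f
  | id (X : C) : mclos W (𝟙 X)
  | comp {X Y Z : C} (f : X ⟶ Y) (g : Y ⟶ Z) :
      mclos W f → mclos W g → mclos W (f ≫ g)

/-- The multiplicative closure as a `MorphismProperty`. -/
def M (W : MorphismProperty C) : MorphismProperty C := fun _ _ f => mclos W f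

variable (W : MorphismProperty C)

lemma W_le_M {X Y : C} (f : X ⟶ Y) (hf : W f) : M W f := mclos.of f hf

instance : (M W).IsMultiplicative where
  id_mem X := mclos.id X
  comp_mem f g hf hg := mclos.comp f g hf hg

variable
    (h1 : ∀ X : C, W (𝟙 X))
    (h2 : ∀ ⦃X Y Z : C⦄ (vm : X ⟶ Y) (wm : Y ⟶ Z), W vm → W wm →
      ∃ (A : C) (u : A ⟶ X), W (u ≫ vm ≫ wm))
    (h3 : ∀ ⦃X Y Z : C⦄ (wm : X ⟶ Y) (f : Z ⟶ Y), W wm →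
      ∃ (P : C) (w' : P ⟶ Z) (f' : P ⟶ X), W w' ∧ f' ≫ wm = w' ≫ f)
    (h4 : ∀ ⦃X Y Z : C⦄ (wm : X ⟶ Y) (f₁ f₂ : Z ⟶ X), W wm → f₁ ≫ wm = f₂ ≫ wm →
      ∃ (P : C) (w' : P ⟶ Z), W w' ∧ w' ≫ f₁ = w' ≫ f₂)

include h1 h2 h3 in
/-- Every morphism in the multiplicative closure becomes a member of `W` after
precomposition with a suitable morphism. -/
lemma rdiv {X Y : C} (s : X ⟶ Y) (hs : M W s) :
    ∃ (U : C) (u : U ⟶ X), W (u ≫ s) := by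
  induction hs with
  | of f hf =>
      exact ⟨_, 𝟙 _, by simpa using hf⟩
  | id X =>
      exact ⟨X, 𝟙 X, by simpa using h1 X⟩
  | comp f g _ _ ihf ihg =>
      obtain ⟨U, u, hu⟩ := ihf
      obtain ⟨V, v, hv⟩ := ihg
      -- `u ≫ f : U ⟶ mid` is in `W`, `v ≫ g : V ⟶ cod` is in `W`, `v : V ⟶ mid`.
      obtain ⟨P, w', f', hw', hcomm⟩ := h3 (u ≫ f) v hu
      -- `f' ≫ u ≫ f = w' ≫ v`
      obtain ⟨S, t, ht⟩ := h2 w' (v ≫ g) hw' hv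
      refine ⟨S, t ≫ f' ≫ u, ?_⟩
      have h5 : f' ≫ u ≫ f = w' ≫ v := hcomm
      simp only [Category.assoc]
      rw [reassoc_of% h5]
      simpa using ht

include h1 h4 in
lemma ext_aux {Y Y' : C} (s : Y ⟶ Y') (hs : M W s) :
    ∀ {X : C} (f₁ f₂ : X ⟶ Y), f₁ ≫ s = f₂ ≫ s →
      ∃ (X' : C) (t : X' ⟶ X), M W t ∧ t ≫ f₁ = t ≫ f₂ := by
  induction hs with
  | of g hg =>
      intro X f₁ f₂ h
      obtain ⟨P, w', hw', hcomm⟩ := h4 g f₁ f₂ hg h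
      exact ⟨P, w', mclos.of w' hw', hcomm⟩
  | id Z =>
      intro X f₁ f₂ h
      simp only [Category.comp_id] at h
      exact ⟨X, 𝟙 X, mclos.id X, by rw [h]⟩
  | comp a b _ _ iha ihb =>
      intro X f₁ f₂ h
      obtain ⟨P, t, ht, hteq⟩ := ihb (f₁ ≫ a) (f₂ ≫ a)
        (by simpa only [Category.assoc] using h)
      obtain ⟨Q, t', ht', ht'eq⟩ := iha (t ≫ f₁) (t ≫ f₂)
        (by simpa only [Category.assoc] using hteq)
      exact ⟨Q, t' ≫ t, mclos.comp t' t ht' ht,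
        by simpa only [Category.assoc] using ht'eq⟩

include h1 h2 h3 h4 in
lemma hasRightCalc : (M W).HasRightCalculusOfFractions := by
  constructor
  · intro X Y φ
    obtain ⟨U, u, hu⟩ := rdiv W h1 h2 h3 φ.s φ.hs
    obtain ⟨P, w', f', hw', hcomm⟩ := h3 (u ≫ φ.s) φ.f hu
    refine ⟨MorphismProperty.RightFraction.mk w' (mclos.of w' hw') (f' ≫ u), ?_⟩
    dsimp
    rw [Category.assoc, ← hcomm]
  · intro X Y Y' f₁ f₂ s hs h
    obtain ⟨X', t, ht, hteq⟩ := ext_aux W h1 h4 s hs f₁ f₂ h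
    exact ⟨X', t, ht, hteq⟩

/-- `W.Q` inverts the multiplicative closure. -/
lemma M_inverted : (M W).IsInvertedBy W.Q := by
  intro X Y f hf
  induction hf with
  | of f hf => exact W.Q_inverts f hf
  | id X => rw [W.Q.map_id]; infer_instance
  | comp f g _ _ ihf ihg =>
      rw [Functor.map_comp]
      exact @IsIso.comp_isIso _ _ _ _ _ _ _ ihf ihg

/-- Strict universal property of `W.Q` with respect to the multiplicative closure. -/
noncomputable def univM (E : Type*) [Category E] :
    Localization.StrictUniversalPropertyFixedTarget W.Q (M W) E where
  inverts := M_inverted W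
  lift F hF := Localization.Construction.lift F (fun _ _ f hf => hF _ (mclos.of f hf))
  fac F hF := Localization.Construction.fac F _
  uniq F₁ F₂ h := Localization.Construction.uniq F₁ F₂ h

lemma isLocalizationM : W.Q.IsLocalization (M W) :=
  Functor.IsLocalization.mk' _ _ (univM W _) (univM W _)

end Statement8Aux

open Statement8Aux

theorem statement8 {C : Type u} [Category.{v} C] (W : MorphismProperty C)
    (h1 : ∀ X : C, W (𝟙 X))
    (h2 : ∀ ⦃X Y Z : C⦄ (vm : X ⟶ Y) (wm : Y ⟶ Z), W vm → W wm →
      ∃ (A : C) (u : A ⟶ X), W (u ≫ vm ≫ wm))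
    (h3 : ∀ ⦃X Y Z : C⦄ (wm : X ⟶ Y) (f : Z ⟶ Y), W wm →
      ∃ (P : C) (w' : P ⟶ Z) (f' : P ⟶ X), W w' ∧ f' ≫ wm = w' ≫ f)
    (h4 : ∀ ⦃X Y Z : C⦄ (wm : X ⟶ Y) (f₁ f₂ : Z ⟶ X), W wm → f₁ ≫ wm = f₂ ≫ wm →
      ∃ (P : C) (w' : P ⟶ Z), W w' ∧ w' ≫ f₁ = w' ≫ f₂) :
    (∀ (A B : C) (φ : W.Q.obj A ⟶ W.Q.obj B),
      ∃ (X : C) (wm : X ⟶ A) (f : X ⟶ B) (hw : W wm),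
        φ = (Localization.isoOfHom W.Q W wm hw).inv ≫ W.Q.map f) ∧
    (∀ (A B X₁ X₂ : C) (w₁ : X₁ ⟶ A) (f₁ : X₁ ⟶ B) (w₂ : X₂ ⟶ A) (f₂ : X₂ ⟶ B)
        (hw₁ : W w₁) (hw₂ : W w₂),
      (Localization.isoOfHom W.Q W w₁ hw₁).inv ≫ W.Q.map f₁ =
          (Localization.isoOfHom W.Q W w₂ hw₂).inv ≫ W.Q.map f₂ ↔
        ∃ (Y : C) (u₁ : Y ⟶ X₁) (u₂ : Y ⟶ X₂),
          u₁ ≫ w₁ = u₂ ≫ w₂ ∧ W (u₁ ≫ w₁) ∧ u₁ ≫ f₁ = u₂ ≫ f₂) := by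
  letI : W.Q.IsLocalization (M W) := isLocalizationM W
  haveI : (M W).HasRightCalculusOfFractions := hasRightCalc W h1 h2 h3 h4
  -- key: expressing the statement's fraction as a `RightFraction.map`
  have key : ∀ {A B X : C} (w : X ⟶ A) (f : X ⟶ B) (hw : W w),
      (Localization.isoOfHom W.Q W w hw).inv ≫ W.Q.map f
        = (MorphismProperty.RightFraction.mk w (W_le_M W w hw) f).map W.Q
            (Localization.inverts W.Q (M W)) := by
    intro A B X w f hw
    rw [← cancel_epi (Localization.isoOfHom W.Q W w hw).hom]
    rw [Iso.hom_inv_id_assoc, Localization.isoOfHom_hom]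
    have h6 := MorphismProperty.RightFraction.map_s_comp_map
      (MorphismProperty.RightFraction.mk w (W_le_M W w hw) f) W.Q
      (Localization.inverts W.Q (M W))
    dsimp at h6
    rw [h6]
  constructor
  · intro A B φ
    obtain ⟨ψ, rfl⟩ := Localization.exists_rightFraction W.Q (M W) φ
    obtain ⟨U, u, hu⟩ := rdiv W h1 h2 h3 ψ.s ψ.hs
    refine ⟨U, u ≫ ψ.s, u ≫ ψ.f, hu, ?_⟩
    rw [key (u ≫ ψ.s) (u ≫ ψ.f) hu]
    haveI : IsIso (W.Q.map (u ≫ ψ.s)) := W.Q_inverts _ hu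
    rw [← cancel_epi (W.Q.map (u ≫ ψ.s))]
    have h6 := MorphismProperty.RightFraction.map_s_comp_map
      (MorphismProperty.RightFraction.mk (u ≫ ψ.s) (W_le_M W _ hu) (u ≫ ψ.f)) W.Q
      (Localization.inverts W.Q (M W))
    have h7 := MorphismProperty.RightFraction.map_s_comp_map ψ W.Q
      (Localization.inverts W.Q (M W))
    dsimp at h6
    rw [h6, Functor.map_comp, Functor.map_comp, Category.assoc, h7]
  · intro A B X₁ X₂ w₁ f₁ w₂ f₂ hw₁ hw₂
    rw [key w₁ f₁ hw₁, key w₂ f₂ hw₂,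
      MorphismProperty.RightFraction.map_eq_iff W.Q (M W)]
    constructor
    · rintro ⟨Z, t₁, t₂, hts, htf, ht⟩
      dsimp at t₁ t₂ hts htf ht
      obtain ⟨S, s, hs⟩ := rdiv W h1 h2 h3 (t₁ ≫ w₁) ht
      refine ⟨S, s ≫ t₁, s ≫ t₂, ?_, ?_, ?_⟩
      · simp only [Category.assoc, hts]
      · simpa using hs
      · simp only [Category.assoc, htf]
    · rintro ⟨Y, u₁, u₂, hus, hw, huf⟩
      exact ⟨Y, u₁, u₂, hus, huf, mclos.of _ hw⟩
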